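/- Let n ≥ 3 and define w : [0,1] × ℝ^{n−1} → ℝ by w(x₁, x') := x₁^{2/n}·(‖x'‖²/2 − 1). Then there exist ρ > 0 and λ > 0 such that w restricted to the closed cylinder [0,1] × closure(B_ρ^{n−1}) is convex, and det D²w(x) ≥ λ for every x in the open cylinder K_{1,ρ} = (0,1) × B_ρ^{n−1}. -/

import Mathlib

set_option maxHeartbeats 1600000
set_option linter.unusedSectionVars false
set_option linter.unusedVariables false

open Set Metric MeasureTheory

/-- The first coordinate `x₁` of `x ∈ ℝⁿ`. -/
noncomputable def coord0 {n : ℕ} (x : EuclideanSpace ℝ (Fin n)) : ℝ :=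
  ∑ i : Fin n, if (i : ℕ) = 0 then x i else 0

/-- The squared norm `‖x'‖²` of the remaining coordinates `x' = (x₂, …, xₙ)`. -/
noncomputable def sqTail {n : ℕ} (x : EuclideanSpace ℝ (Fin n)) : ℝ :=
  ∑ i : Fin n, if (i : ℕ) = 0 then 0 else x i ^ 2

/-- The determinant of the Hessian matrix of `w` at `x`. -/
noncomputable def hessDet {n : ℕ} (w : EuclideanSpace ℝ (Fin n) → ℝ)
    (x : EuclideanSpace ℝ (Fin n)) : ℝ :=
  (Matrix.of fun i j : Fin n =>
    fderiv ℝ (fun y => fderiv ℝ w y (EuclideanSpace.single i 1)) x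
      (EuclideanSpace.single j 1)).det

theorem sqTail_nonneg {n : ℕ} (x : EuclideanSpace ℝ (Fin n)) : 0 ≤ sqTail x := by
  apply Finset.sum_nonneg; intro i _; positivity

section aux
variable {n : ℕ} [NeZero n]

theorem fin_val_zero_iff (i : Fin n) : (i:ℕ) = 0 ↔ i = 0 :=
  ⟨fun h => Fin.ext (by simpa using h), fun h => by subst h; simp⟩

theorem coord0_eq (x : EuclideanSpace ℝ (Fin n)) : coord0 x = x 0 := by
  rw [coord0]
  rw [Finset.sum_congr rfl (fun i _ => if_congr (fin_val_zero_iff i) rfl rfl)]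
  simp

theorem sqTail_eq (x : EuclideanSpace ℝ (Fin n)) :
    sqTail x = ∑ i : Fin n, if i = 0 then 0 else x i ^ 2 := by
  rw [sqTail]
  exact Finset.sum_congr rfl (fun i _ => if_congr (fin_val_zero_iff i) rfl rfl)

end aux

theorem core_ineq (p β t u s D : ℝ) (hp : 0 < p) (hp2 : p ≤ 2/3) (ht : 0 < t)
    (hs0 : 0 ≤ s) (hs : s ≤ 1/4) (hD : 0 ≤ D) (hu : u^2 ≤ s*D) :
    0 ≤ p*(p-1)*β^2*(s/2-1) + 2*p*β*t*u + t^2*D := by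
  set A : ℝ := p*(1-p)*β^2*(1-s/2) with hA
  set c : ℝ := p*β*u with hc
  have hA0 : 0 ≤ A := by
    rw [hA]
    exact mul_nonneg (mul_nonneg (mul_nonneg hp.le (by linarith)) (sq_nonneg β)) (by linarith)
  have h1 : p*s ≤ (1-p)*(1-s/2) := by nlinarith
  have key : c^2 ≤ A * D := by
    have h2 : u^2*(p^2*β^2) ≤ s*D*(p^2*β^2) :=
      mul_le_mul_of_nonneg_right hu (by positivity)
    have h3 := mul_le_mul_of_nonneg_left h1 (show (0:ℝ) ≤ p*β^2*D by positivity)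
    rw [hc, hA]; nlinarith [h2, h3]
  have hgoal : 0 ≤ A + 2*c*t + t^2*D := by
    by_contra hneg
    push_neg at hneg
    have hS : 0 ≤ A + t^2*D := by positivity
    have h5 : (A + t^2*D)*(A + t^2*D) < (-(2*c*t))*(-(2*c*t)) :=
      mul_self_lt_mul_self hS (by linarith)
    have h6 : 4*(c^2)*t^2 ≤ 4*(A*D)*t^2 := by nlinarith [sq_nonneg t]
    have h7 : 4*(A*D)*t^2 ≤ (A+t^2*D)^2 := by nlinarith [sq_nonneg (A - t^2*D)]
    nlinarith [h5, h6, h7]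
  nlinarith [hgoal]

theorem convex_part {n : ℕ} [NeZero n] (hn : 3 ≤ n) :
    ConvexOn ℝ
      {x : EuclideanSpace ℝ (Fin n) | coord0 x ∈ Set.Icc (0:ℝ) 1 ∧ sqTail x ≤ ((1:ℝ)/2)^2}
      (fun x => coord0 x ^ ((2:ℝ)/n) * (sqTail x / 2 - 1)) := by
  have hn0 : (n:ℝ) ≠ 0 := Nat.cast_ne_zero.mpr (by omega)
  have hn3 : (3:ℝ) ≤ (n:ℝ) := by exact_mod_cast hn
  set p : ℝ := 2/(n:ℝ) with hp
  have hp0 : 0 < p := by rw [hp]; positivity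
  have hp2 : p ≤ 2/3 := by
    rw [hp, div_le_div_iff₀ (by linarith) (by norm_num)]; linarith
  constructor
  · -- convexity of the set
    rintro x ⟨hx1, hx2⟩ y ⟨hy1, hy2⟩ α β hα hβ hαβ
    rw [coord0_eq] at hx1 hy1
    have hcoord : coord0 (α • x + β • y) = α * x 0 + β * y 0 := by
      rw [coord0_eq]; simp [smul_eq_mul]
    constructor
    · rw [hcoord]
      constructor
      · nlinarith [hx1.1, hy1.1]
      · nlinarith [hx1.2, hy1.2]
    · have h1 : sqTail (α • x + β • y) ≤ α * sqTail x + β * sqTail y := by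
        rw [sqTail_eq, sqTail_eq, sqTail_eq, Finset.mul_sum, Finset.mul_sum,
          ← Finset.sum_add_distrib]
        apply Finset.sum_le_sum
        intro i _
        by_cases hi : i = 0
        · simp [hi]
        · simp only [hi, if_false, PiLp.add_apply, PiLp.smul_apply, smul_eq_mul]
          nlinarith [sq_nonneg (x i - y i), mul_nonneg hα hβ]
      have := hx2; have := hy2
      nlinarith [h1]
  · -- the convexity inequality
    rintro x ⟨hx1, hx2⟩ y ⟨hy1, hy2⟩ α β hα hβ hαβ
    rw [coord0_eq] at hx1 hy1
    set β0 : ℝ := y 0 - x 0 with hβ0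
    set T : ℝ → ℝ := fun θ => x 0 + θ * β0 with hT
    set Q : ℝ → ℝ :=
      fun θ => ∑ i : Fin n, if i = 0 then 0 else (x i + θ * (y i - x i)) ^ 2 with hQdef
    set φ : ℝ → ℝ := fun θ => T θ ^ p * (Q θ / 2 - 1) with hφdef
    have hα' : α = 1 - β := by linarith
    -- identification of values
    have hQ0 : Q 0 = sqTail x := by
      rw [hQdef, sqTail_eq]
      exact Finset.sum_congr rfl (fun i _ => by by_cases hi : i = 0 <;> simp [hi])
    have hQ1 : Q 1 = sqTail y := by
      rw [hQdef, sqTail_eq]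
      refine Finset.sum_congr rfl (fun i _ => ?_)
      by_cases hi : i = 0
      · simp [hi]
      · simp only [hi, if_false]
        ring_nf
    have hT0 : T 0 = x 0 := by rw [hT]; simp
    have hT1 : T 1 = y 0 := by rw [hT, hβ0]; ring
    have hvalβ : coord0 (α • x + β • y) = T β := by
      rw [coord0_eq, hT, hβ0]; simp [smul_eq_mul]; rw [hα']; ring
    have hsqβ : sqTail (α • x + β • y) = Q β := by
      rw [sqTail_eq, hQdef]
      refine Finset.sum_congr rfl (fun i _ => ?_)
      by_cases hi : i = 0
      · simp [hi]
      · simp only [hi, if_false, PiLp.add_apply, PiLp.smul_apply, smul_eq_mul]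
        rw [hα']; ring
    -- Q is bounded by 1/4 on [0,1]
    have hQbound : ∀ θ : ℝ, θ ∈ Set.Icc (0:ℝ) 1 → Q θ ≤ 1/4 := by
      intro θ hθ
      have h1 : Q θ ≤ (1-θ) * sqTail x + θ * sqTail y := by
        rw [hQdef, sqTail_eq, sqTail_eq, Finset.mul_sum, Finset.mul_sum,
          ← Finset.sum_add_distrib]
        apply Finset.sum_le_sum
        intro i _
        by_cases hi : i = 0
        · simp [hi]
        · simp only [hi, if_false]
          nlinarith [sq_nonneg (x i - y i), mul_nonneg hθ.1 (by linarith [hθ.2] : (0:ℝ) ≤ 1 - θ)]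
      nlinarith [hx2, hy2, hθ.1, hθ.2]
    have hQ0' : ∀ θ : ℝ, 0 ≤ Q θ := by
      intro θ; rw [hQdef]
      apply Finset.sum_nonneg; intro i _; positivity
    -- convexity of φ on [0,1]
    have hφconv : ConvexOn ℝ (Set.Icc (0:ℝ) 1) φ := by
      by_cases hzero : x 0 = 0 ∧ y 0 = 0
      · have hφ0 : φ = fun _ => (0:ℝ) := by
          funext θ
          rw [hφdef, hT]
          simp [hzero.1, hzero.2, hβ0, Real.zero_rpow hp0.ne']
        rw [hφ0]
        exact convexOn_const 0 (convex_Icc 0 1)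
      · -- T is positive on the open interval
        have hTpos : ∀ θ : ℝ, θ ∈ Set.Ioo (0:ℝ) 1 → 0 < T θ := by
          intro θ hθ
          show 0 < x 0 + θ * β0
          rw [hβ0]
          by_cases hx0 : x 0 = 0
          · have hy0' : 0 < y 0 :=
              lt_of_le_of_ne hy1.1 (fun h => hzero ⟨hx0, h.symm⟩)
            nlinarith [hθ.1, hθ.2]
          · have hx0' : 0 < x 0 := lt_of_le_of_ne hx1.1 (Ne.symm hx0)
            nlinarith [hθ.1, hθ.2, hy1.1]
        have hTc : Continuous T := by
          rw [hT]; exact continuous_const.add (continuous_id.mul continuous_const)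
        have hQc : Continuous Q := by
          rw [hQdef]
          apply continuous_finset_sum
          intro i _
          by_cases hi : i = 0
          · simp only [hi, if_pos rfl]; exact continuous_const
          · simp only [hi, if_false]
            exact ((continuous_const.add (continuous_id.mul continuous_const)).pow 2)
        have hφc : Continuous φ := by
          rw [hφdef]
          exact (hTc.rpow_const (fun θ => Or.inr hp0.le)).mul
            ((hQc.div_const 2).sub continuous_const)
        -- first derivatives
        set Q' : ℝ → ℝ :=
          fun θ => ∑ i : Fin n, if i = 0 then 0
            else 2 * (x i + θ * (y i - x i)) * (y i - x i) with hQ'def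
        set Q'' : ℝ → ℝ :=
          fun θ => ∑ i : Fin n, if i = 0 then 0 else 2 * (y i - x i) ^ 2 with hQ''def
        have hQ'c : ∀ θ : ℝ, HasDerivAt Q (Q' θ) θ := by
          intro θ
          rw [hQdef, hQ'def]
          apply HasDerivAt.fun_sum
          intro i _
          by_cases hi : i = 0
          · simp only [hi, if_pos rfl]; exact hasDerivAt_const θ 0
          · simp only [hi, if_false]
            have base : HasDerivAt (fun θ : ℝ => x i + θ * (y i - x i)) (y i - x i) θ := by
              simpa using ((hasDerivAt_id θ).mul_const (y i - x i)).const_add (x i)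
            have := base.pow 2
            exact this.congr_deriv (by norm_num <;> ring)
        have hQ''c : ∀ θ : ℝ, HasDerivAt Q' (Q'' θ) θ := by
          intro θ
          rw [hQ'def, hQ''def]
          apply HasDerivAt.fun_sum
          intro i _
          by_cases hi : i = 0
          · simp only [hi, if_pos rfl]; exact hasDerivAt_const θ 0
          · simp only [hi, if_false]
            have base : HasDerivAt (fun θ : ℝ => x i + θ * (y i - x i)) (y i - x i) θ := by
              simpa using ((hasDerivAt_id θ).mul_const (y i - x i)).const_add (x i)
            have := (base.const_mul 2).mul_const (y i - x i)
            exact this.congr_deriv (by ring)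
        have hT'c : ∀ θ : ℝ, HasDerivAt T β0 θ := by
          intro θ
          rw [hT]
          simpa using ((hasDerivAt_id θ).mul_const β0).const_add (x 0)
        have hrpow : ∀ (q : ℝ) (θ : ℝ), 0 < T θ →
            HasDerivAt (fun θ => T θ ^ q) (q * T θ ^ (q-1) * β0) θ := by
          intro q θ ht
          exact (Real.hasDerivAt_rpow_const (Or.inl ht.ne')).comp θ (hT'c θ)
        set φ' : ℝ → ℝ :=
          fun θ => p * T θ ^ (p-1) * β0 * (Q θ / 2 - 1) + T θ ^ p * (Q' θ / 2) with hφ'def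
        have hφ'c : ∀ θ : ℝ, 0 < T θ → HasDerivAt φ (φ' θ) θ := by
          intro θ ht
          rw [hφdef, hφ'def]
          exact (hrpow p θ ht).mul (((hQ'c θ).div_const 2).sub_const 1)
        -- second derivative
        set D2 : ℝ → ℝ := fun θ =>
          (p * ((p-1) * T θ ^ (p-1-1) * β0) * β0) * (Q θ / 2 - 1)
            + p * T θ ^ (p-1) * β0 * (Q' θ / 2)
            + (p * T θ ^ (p-1) * β0 * (Q' θ / 2) + T θ ^ p * (Q'' θ / 2)) with hD2def
        have hφ''c : ∀ θ : ℝ, 0 < T θ → HasDerivAt φ' (D2 θ) θ := by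
          intro θ ht
          have t1 : HasDerivAt (fun θ => p * T θ ^ (p-1) * β0)
              (p * ((p-1) * T θ ^ (p-1-1) * β0) * β0) θ :=
            ((hrpow (p-1) θ ht).const_mul p).mul_const β0
          exact (t1.mul (((hQ'c θ).div_const 2).sub_const 1)).add
            ((hrpow p θ ht).mul (((hQ''c θ).div_const 2)))
        -- apply the 1D criterion
        apply convexOn_of_deriv2_nonneg (convex_Icc 0 1) hφc.continuousOn
        · rw [interior_Icc]
          exact fun θ hθ => ((hφ'c θ (hTpos θ hθ)).differentiableAt).differentiableWithinAt
        · rw [interior_Icc]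
          intro θ hθ
          have ht := hTpos θ hθ
          have hEv : deriv φ =ᶠ[nhds θ] φ' := by
            have hUopen : IsOpen {θ : ℝ | 0 < T θ} := isOpen_lt continuous_const hTc
            exact Filter.eventually_of_mem (hUopen.mem_nhds ht)
              (fun θ' ht' => (hφ'c θ' ht').deriv)
          exact ((hEv.differentiableAt_iff).mpr
            (hφ''c θ ht).differentiableAt).differentiableWithinAt
        · rw [interior_Icc]
          intro θ hθ
          have ht := hTpos θ hθ
          have hEv : deriv φ =ᶠ[nhds θ] φ' := by
            have hUopen : IsOpen {θ : ℝ | 0 < T θ} := isOpen_lt continuous_const hTc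
            exact Filter.eventually_of_mem (hUopen.mem_nhds ht)
              (fun θ' ht' => (hφ'c θ' ht').deriv)
          have h2 : deriv^[2] φ θ = D2 θ := by
            show deriv (deriv φ) θ = D2 θ
            rw [hEv.deriv_eq, (hφ''c θ ht).deriv]
          rw [h2]
          -- algebra: D2 θ = T θ ^ (p-2) * E
          set t := T θ with htt
          set s := Q θ with hss
          set u : ℝ := Q' θ / 2 with huu
          set Dq : ℝ := Q'' θ / 2 with hDq
          have hDq0 : 0 ≤ Dq := by
            rw [hDq, hQ''def]
            apply div_nonneg _ (by norm_num)
            apply Finset.sum_nonneg; intro i _; positivity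
          have hCS : u^2 ≤ s * Dq := by
            show ((∑ i : Fin n, if i = 0 then 0
                else 2 * (x i + θ * (y i - x i)) * (y i - x i)) / 2) ^ 2
              ≤ (∑ i : Fin n, if i = 0 then 0 else (x i + θ * (y i - x i)) ^ 2)
                * ((∑ i : Fin n, if i = 0 then 0 else 2 * (y i - x i) ^ 2) / 2)
            have hfg := Finset.sum_mul_sq_le_sq_mul_sq Finset.univ
              (fun i : Fin n => if i = 0 then 0 else (x i + θ * (y i - x i)))
              (fun i : Fin n => if i = 0 then 0 else (y i - x i))
            have e1 : (∑ i : Fin n, if i = 0 then 0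
                else 2 * (x i + θ * (y i - x i)) * (y i - x i)) / 2
                = ∑ i : Fin n, (if i = 0 then 0 else (x i + θ * (y i - x i)))
                  * (if i = 0 then 0 else (y i - x i)) := by
              rw [Finset.sum_div]
              refine Finset.sum_congr rfl (fun i _ => ?_)
              by_cases hi : i = 0 <;> simp [hi] <;> ring
            have e2 : (∑ i : Fin n, if i = 0 then 0 else (x i + θ * (y i - x i)) ^ 2)
                = ∑ i : Fin n, (if i = 0 then 0 else (x i + θ * (y i - x i))) ^ 2 := by
              refine Finset.sum_congr rfl (fun i _ => ?_)
              by_cases hi : i = 0 <;> simp [hi]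
            have e3 : (∑ i : Fin n, if i = 0 then 0 else 2 * (y i - x i) ^ 2) / 2
                = ∑ i : Fin n, (if i = 0 then 0 else (y i - x i)) ^ 2 := by
              rw [Finset.sum_div]
              refine Finset.sum_congr rfl (fun i _ => ?_)
              by_cases hi : i = 0 <;> simp [hi] <;> ring
            rw [e1, e2, e3]
            exact hfg
          have e1 : t ^ ((p-2)+1) = t ^ (p-2) * t := by
            rw [Real.rpow_add ht, Real.rpow_one]
          have e2 : t ^ ((p-2)+1+1) = t ^ (p-2) * t * t := by
            rw [Real.rpow_add ht, e1, Real.rpow_one]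
          have hpow1 : t ^ (p-1) = t ^ (p-2) * t := by
            rw [← e1]; congr 1; ring
          have hpowp : t ^ p = t ^ (p-2) * t * t := by
            rw [← e2]; congr 1; ring
          have hpow11 : t ^ (p-1-1) = t ^ (p-2) := by congr 1; ring
          have hD2val : D2 θ = t ^ (p-2) *
              (p*(p-1)*β0^2*(s/2-1) + 2*p*β0*t*u + t^2*Dq) := by
            show (p * ((p-1) * t ^ (p-1-1) * β0) * β0) * (s / 2 - 1)
                + p * t ^ (p-1) * β0 * u + (p * t ^ (p-1) * β0 * u + t ^ p * Dq)
              = t ^ (p-2) * (p*(p-1)*β0^2*(s/2-1) + 2*p*β0*t*u + t^2*Dq)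
            rw [hpow11, hpow1, hpowp]
            ring
          rw [hD2val]
          apply mul_nonneg (Real.rpow_nonneg ht.le _)
          exact core_ineq p β0 t u s Dq hp0 hp2 ht (hQ0' θ)
            (hQbound θ (Set.mem_Icc_of_Ioo hθ)) hDq0 hCS
    -- conclude
    have hmem0 : (0:ℝ) ∈ Set.Icc (0:ℝ) 1 := by norm_num
    have hmem1 : (1:ℝ) ∈ Set.Icc (0:ℝ) 1 := by norm_num
    have := hφconv.2 hmem0 hmem1 hα hβ hαβ
    simp only [smul_eq_mul, mul_zero, mul_one, zero_add] at this
    calc coord0 (α • x + β • y) ^ p * (sqTail (α • x + β • y) / 2 - 1)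
        = φ β := by rw [hvalβ, hsqβ, hφdef]
      _ ≤ α * φ 0 + β * φ 1 := this
      _ = α * (coord0 x ^ p * (sqTail x / 2 - 1)) + β * (coord0 y ^ p * (sqTail y / 2 - 1)) := by
          rw [hφdef]; simp only [hT0, hT1, hQ0, hQ1, coord0_eq]

section test
variable {n : ℕ} [NeZero n]
local notation "E" => EuclideanSpace ℝ (Fin n)

noncomputable def sqT' (x : E) : E →L[ℝ] ℝ :=
  ∑ i : Fin n, if i = 0 then 0 else (2 * x i) • EuclideanSpace.proj i

theorem sqT'_apply (x : E) (j : Fin n) :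
    sqT' x (EuclideanSpace.single j 1) = if j = 0 then 0 else 2 * x j := by
  rw [sqT', ContinuousLinearMap.sum_apply]
  rw [Finset.sum_congr rfl (fun i _ => show _ = (if i = 0 then (0:ℝ) else 2 * x i) * (if i = j then 1 else 0) by
    rw [apply_ite (fun L : E →L[ℝ] ℝ => L (EuclideanSpace.single j 1))]
    by_cases h : i = 0 <;> simp [h, EuclideanSpace.single_apply])]
  simp [mul_ite, Finset.sum_ite_eq']

end test
section test2
variable {n : ℕ} [NeZero n]
local notation "E" => EuclideanSpace ℝ (Fin n)

theorem hasFDerivAt_proj (i : Fin n) (x : E) :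
    HasFDerivAt (fun y : E => y i) (EuclideanSpace.proj i : E →L[ℝ] ℝ) x := by
  exact (EuclideanSpace.proj i : E →L[ℝ] ℝ).hasFDerivAt

theorem hasFDerivAt_sqTail (x : E) :
    HasFDerivAt (fun x : E => ∑ i : Fin n, if i = 0 then 0 else x i ^ 2) (sqT' x) x := by
  rw [sqT']
  apply HasFDerivAt.fun_sum
  intro i _
  by_cases h : i = 0
  · simpa [h] using hasFDerivAt_const (0:ℝ) x
  · simp only [h, if_false]
    have := (hasDerivAt_pow 2 (x i)).comp_hasFDerivAt x (hasFDerivAt_proj i x)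
    exact this.congr_fderiv (by norm_num)

theorem hasFDerivAt_pow0 (p : ℝ) (x : E) (hx : x 0 ≠ 0) :
    HasFDerivAt (fun y : E => (y 0) ^ p) ((p * (x 0) ^ (p - 1)) • (EuclideanSpace.proj 0 : E →L[ℝ] ℝ)) x :=
  by have h := (Real.hasDerivAt_rpow_const (x := x 0) (p := p) (Or.inl hx)).comp_hasFDerivAt x
      (hasFDerivAt_proj 0 x)
     exact h

end test2
set_option linter.unusedSectionVars false
section test3
variable {n : ℕ} [NeZero n]
local notation "E" => EuclideanSpace ℝ (Fin n)
noncomputable def wD (p : ℝ) (x : E) : E →L[ℝ] ℝ :=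
  ((x 0) ^ p) • ((2:ℝ)⁻¹ • sqT' x) +
    ((2:ℝ)⁻¹ * (∑ i : Fin n, if i = 0 then 0 else x i ^ 2) - 1) •
      ((p * (x 0) ^ (p - 1)) • (EuclideanSpace.proj 0 : E →L[ℝ] ℝ))

theorem hasFDerivAt_w (p : ℝ) (x : E) (hx : x 0 ≠ 0) :
    HasFDerivAt (fun y : E => (y 0) ^ p * ((2:ℝ)⁻¹ * (∑ i : Fin n, if i = 0 then 0 else y i ^ 2) - 1))
      (wD p x) x := by
  exact (hasFDerivAt_pow0 p x hx).mul (((hasFDerivAt_sqTail x).const_mul (2:ℝ)⁻¹).sub_const 1)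

theorem wD_apply (p : ℝ) (x : E) (j : Fin n) :
    wD p x (EuclideanSpace.single j 1) =
      if j = 0 then p * (x 0) ^ (p - 1) * ((2:ℝ)⁻¹ * (∑ i : Fin n, if i = 0 then 0 else x i ^ 2) - 1)
      else (x 0) ^ p * x j := by
  rw [wD]
  have h0 : (EuclideanSpace.proj (0:Fin n) : E →L[ℝ] ℝ) (EuclideanSpace.single j 1)
      = if j = 0 then 1 else 0 := by
    simp [EuclideanSpace.single_apply]
    by_cases h : j = 0 <;> simp [h]
    intro h'; exact absurd h'.symm h
  simp only [ContinuousLinearMap.add_apply, ContinuousLinearMap.smul_apply, sqT'_apply, h0,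
    smul_eq_mul]
  by_cases h : j = 0 <;> simp [h] <;> ring
end test3
section test4
variable {n : ℕ} [NeZero n]
local notation "E" => EuclideanSpace ℝ (Fin n)

theorem continuous_proj0 : Continuous (fun y : E => y 0) := by
  exact (EuclideanSpace.proj (0 : Fin n) : E →L[ℝ] ℝ).continuous

noncomputable def Hmat (p : ℝ) (x : E) : Matrix (Fin n) (Fin n) ℝ :=
  Matrix.of fun i j =>
    if i = 0 then
      (if j = 0 then p * (p-1) * (x 0) ^ (p-2) * ((2:ℝ)⁻¹ * (∑ k : Fin n, if k = 0 then 0 else x k ^ 2) - 1)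
       else p * (x 0) ^ (p-1) * x j)
    else
      (if j = 0 then p * (x 0) ^ (p-1) * x i else (if i = j then (x 0) ^ p else 0))

theorem hess_entry (p : ℝ) (x : E) (hx : 0 < x 0) (i j : Fin n) :
    fderiv ℝ (fun y =>
        fderiv ℝ (fun z : E => (z 0) ^ p * ((2:ℝ)⁻¹ * (∑ k : Fin n, if k = 0 then 0 else z k ^ 2) - 1)) y
          (EuclideanSpace.single i 1)) x (EuclideanSpace.single j 1) = Hmat p x i j := by
  have hU : ∀ᶠ y in nhds x, 0 < y 0 :=
    Filter.eventually_of_mem ((isOpen_lt continuous_const continuous_proj0).mem_nhds hx)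
      (fun y hy => hy)
  -- the inner function agrees with wD p · (single i 1) near x
  have hEv : (fun y => fderiv ℝ (fun z : E => (z 0) ^ p *
        ((2:ℝ)⁻¹ * (∑ k : Fin n, if k = 0 then 0 else z k ^ 2) - 1)) y (EuclideanSpace.single i 1))
      =ᶠ[nhds x] (fun y => wD p y (EuclideanSpace.single i 1)) := by
    filter_upwards [hU] with y hy
    rw [(hasFDerivAt_w p y hy.ne').fderiv]
  rw [hEv.fderiv_eq]
  by_cases hi : i = 0
  · -- inner function is y ↦ p * (y 0)^(p-1) * (...)
    have hfun : (fun y : E => wD p y (EuclideanSpace.single i 1)) = fun y : E =>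
        p * ((y 0) ^ (p-1) * ((2:ℝ)⁻¹ * (∑ k : Fin n, if k = 0 then 0 else y k ^ 2) - 1)) := by
      funext y; rw [wD_apply]; simp [hi, mul_assoc]
    have hD : HasFDerivAt (fun y : E => wD p y (EuclideanSpace.single i 1)) (p • wD (p-1) x) x := by
      rw [hfun]
      exact (hasFDerivAt_w (p-1) x hx.ne').const_mul p
    rw [hD.fderiv]
    simp only [ContinuousLinearMap.smul_apply, wD_apply, smul_eq_mul, Hmat, hi]
    by_cases hj : j = 0 <;> simp [hj, Matrix.of_apply] <;> ring_nf
  · have hfun : (fun y : E => wD p y (EuclideanSpace.single i 1)) = fun y : E =>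
        (y 0) ^ p * y i := by
      funext y; rw [wD_apply]; simp [hi]
    have hD : HasFDerivAt (fun y : E => wD p y (EuclideanSpace.single i 1))
        (((x 0) ^ p) • (EuclideanSpace.proj i : E →L[ℝ] ℝ) +
          (x i) • ((p * (x 0) ^ (p - 1)) • (EuclideanSpace.proj 0 : E →L[ℝ] ℝ))) x := by
      rw [hfun]
      exact (hasFDerivAt_pow0 p x hx.ne').mul (hasFDerivAt_proj i x)
    rw [hD.fderiv]
    have hsj : ∀ k : Fin n, (EuclideanSpace.proj (k:Fin n) : E →L[ℝ] ℝ) (EuclideanSpace.single j 1)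
        = if k = j then 1 else 0 := by
      intro k; simp [EuclideanSpace.single_apply]
    simp only [ContinuousLinearMap.add_apply, ContinuousLinearMap.smul_apply, hsj, smul_eq_mul,
      Hmat, Matrix.of_apply, hi, if_false]
    by_cases hj : j = 0
    · simp [hj, Ne.symm hi, hi]; ring
    · by_cases hij : i = j <;> simp [hij, hj] <;> ring_nf <;>
        exact fun h => absurd h.symm hj
end test4
section test5
variable {n : ℕ} [NeZero n]
local notation "E" => EuclideanSpace ℝ (Fin n)

theorem det_Hmat (p : ℝ) (x : E) (hx : 0 < x 0) :
    (Hmat p x).det =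
      ((p * (p-1) * ((2:ℝ)⁻¹ * (∑ k : Fin n, if k = 0 then 0 else x k ^ 2) - 1)
        - p^2 * (∑ k : Fin n, if k = 0 then 0 else x k ^ 2)) * (x 0) ^ (p-2))
        * ((x 0) ^ p) ^ (n - 1) := by
  set t := x 0 with ht
  set s := (∑ k : Fin n, if k = 0 then 0 else x k ^ 2) with hs
  set d0 : ℝ := (p * (p - 1) * (2⁻¹ * s - 1) - p ^ 2 * s) * t ^ (p - 2) with hd0
  set U : Matrix (Fin n) (Fin n) ℝ :=
    Matrix.of (fun i j => if i = j then 1 else if i = 0 then p * x j / t else 0) with hU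
  set d : Fin n → ℝ := fun k => if k = 0 then d0 else t ^ p with hd
  have hpow2 : t ^ p = t ^ (p-2) * t^2 := by
    rw [← Real.rpow_natCast t 2, ← Real.rpow_add hx]; norm_num
  have hpow1 : t ^ (p-1) = t ^ p / t := Real.rpow_sub_one hx.ne' p
  have hfact : Hmat p x = U * Matrix.diagonal d * U.transpose := by
    funext i j
    have hmul : (U * Matrix.diagonal d * U.transpose) i j = ∑ k, U i k * d k * U j k := by
      rw [Matrix.mul_apply]
      congr 1; funext k
      rw [Matrix.mul_diagonal, Matrix.transpose_apply]
    rw [hmul]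
    by_cases hi : i = 0
    · by_cases hj : j = 0
      · subst hi; subst hj
        rw [Finset.sum_congr rfl (fun k _ => show U 0 k * d k * U 0 k
            = (if k = 0 then d0 else 0) + p^2 * t^(p-2) * (if k = 0 then 0 else x k ^2) by
          by_cases hk : k = 0
          · simp [hk, hU, hd]
          · simp [hk, hU, hd, Ne.symm hk]
            rw [hpow2]; field_simp)]
        rw [Finset.sum_add_distrib, ← Finset.mul_sum,
          Finset.sum_ite_eq' Finset.univ (0 : Fin n) (fun _ => d0)]
        simp only [Finset.mem_univ, if_pos, ← hs, Hmat, Matrix.of_apply, if_pos rfl, hd0]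
        ring
      · subst hi
        rw [Finset.sum_eq_single j]
        · simp [hU, hd, Ne.symm hj, hj, Hmat]
          rw [hpow1]; field_simp
        · intro k _ hk
          by_cases hk0 : k = 0
          · subst hk0; simp [hU, hd, hj]
          · simp [hU, hd, hk0, Ne.symm hk0, (show ¬ j = k from fun h => hk h.symm), hj]
        · intro h; exact absurd (Finset.mem_univ j) h
    · rw [Finset.sum_eq_single i]
      · by_cases hj : j = 0
        · subst hj
          simp [hU, hd, hi, (show ¬ (0:Fin n) = i from fun h => hi h.symm), Hmat]
          rw [hpow1]; field_simp
        · by_cases hij : i = j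
          · subst hij; simp [hU, hd, hi, Hmat, hj]; rfl
          · simp [hU, hd, hi, hj, hij, (show ¬ j = i from fun h => hij h.symm), Hmat]
      · intro k _ hk
        by_cases hk0 : k = 0
        · subst hk0
          simp [hU, hd, hi, (show ¬ i = 0 from hi), Hmat]
        · simp [hU, hd, (show ¬ i = k from fun h => hk h.symm), hi]
      · intro h; exact absurd (Finset.mem_univ i) h
  have hdetU : U.det = 1 := by
    rw [Matrix.det_of_upperTriangular]
    · apply Finset.prod_eq_one; intro k _; simp [hU]
    · intro i j hij
      have h1 : ¬ i = j := fun h => absurd hij (by simp [h])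
      have h2 : ¬ i = 0 := fun h => by subst h; rw [Fin.lt_def] at hij; simp at hij
      simp [hU, h1, h2]
  rw [hfact, Matrix.det_mul, Matrix.det_mul, Matrix.det_transpose, hdetU, one_mul, mul_one,
    Matrix.det_diagonal, ← Finset.mul_prod_erase Finset.univ d (Finset.mem_univ 0),
    Finset.prod_congr rfl (fun k hk => show d k = t^p from by
      simp [hd, Finset.ne_of_mem_erase hk]),
    Finset.prod_const, Finset.card_erase_of_mem (Finset.mem_univ 0), Finset.card_univ,
    Fintype.card_fin]
  simp [hd]
end test5
section test6
variable {n : ℕ} [NeZero n]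
local notation "E" => EuclideanSpace ℝ (Fin n)

theorem hessDet_eq (hn : 3 ≤ n) (x : E) (hx : 0 < x 0) :
    hessDet (fun y => coord0 y ^ ((2 : ℝ) / n) * (sqTail y / 2 - 1)) x =
      (2/(n:ℝ)) * ((2/(n:ℝ))-1) * ((2:ℝ)⁻¹ * (∑ k : Fin n, if k = 0 then 0 else x k ^ 2) - 1)
        - (2/(n:ℝ))^2 * (∑ k : Fin n, if k = 0 then 0 else x k ^ 2) := by
  set p : ℝ := 2/(n:ℝ) with hp
  have hfun : (fun y : E => coord0 y ^ ((2:ℝ)/n) * (sqTail y / 2 - 1))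
      = (fun z : E => (z 0) ^ p * ((2:ℝ)⁻¹ * (∑ k : Fin n, if k = 0 then 0 else z k ^ 2) - 1)) := by
    funext z
    rw [coord0_eq, show sqTail z / 2 - 1
      = (2:ℝ)⁻¹ * (∑ k : Fin n, if k = 0 then 0 else z k ^ 2) - 1 from by rw [sqTail_eq]; ring]
  rw [hessDet, hfun]
  have hM : (Matrix.of fun i j : Fin n =>
      fderiv ℝ (fun y => fderiv ℝ
        (fun z : E => (z 0) ^ p * ((2:ℝ)⁻¹ * (∑ k : Fin n, if k = 0 then 0 else z k ^ 2) - 1))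
        y (EuclideanSpace.single i 1)) x (EuclideanSpace.single j 1)) = Hmat p x := by
    funext i j
    exact hess_entry p x hx i j
  rw [hM, det_Hmat p x hx]
  have hn0 : (n:ℝ) ≠ 0 := Nat.cast_ne_zero.mpr (by omega)
  have h1 : ((x 0) ^ p) ^ (n-1) = (x 0) ^ (p * ((n-1:ℕ):ℝ)) := by
    rw [← Real.rpow_natCast ((x 0)^p) (n-1), ← Real.rpow_mul hx.le]
  rw [h1, mul_assoc, ← Real.rpow_add hx]
  have h2 : (p - 2) + p * ((n-1:ℕ):ℝ) = 0 := by
    have h3 : ((n-1:ℕ):ℝ) = (n:ℝ) - 1 := by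
      rw [Nat.cast_sub (by omega)]; simp
    rw [h3, hp]; field_simp; ring
  rw [h2, Real.rpow_zero, mul_one]
end test6

/-- For `n ≥ 3` and `w(x₁, x') = x₁^{2/n}·(‖x'‖²/2 - 1)`, there exist `ρ > 0` and `λ > 0`
such that `w` is convex on `[0,1] × closure(B_ρ^{n-1})` and `det D²w ≥ λ` on
`(0,1) × B_ρ^{n-1}`. -/
theorem convex_and_hessDet_lower_bound (n : ℕ) (hn : 3 ≤ n) :
    ∃ ρ > (0 : ℝ), ∃ lam > (0 : ℝ),
      ConvexOn ℝ {x : EuclideanSpace ℝ (Fin n) | coord0 x ∈ Icc (0 : ℝ) 1 ∧ sqTail x ≤ ρ ^ 2}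
          (fun x => coord0 x ^ ((2 : ℝ) / n) * (sqTail x / 2 - 1)) ∧
        ∀ x : EuclideanSpace ℝ (Fin n), coord0 x ∈ Ioo (0 : ℝ) 1 → sqTail x < ρ ^ 2 →
          lam ≤ hessDet (fun y => coord0 y ^ ((2 : ℝ) / n) * (sqTail y / 2 - 1)) x := by
  haveI : NeZero n := ⟨by omega⟩
  have hn0 : (n:ℝ) ≠ 0 := Nat.cast_ne_zero.mpr (by omega)
  have hn3 : (3:ℝ) ≤ (n:ℝ) := by exact_mod_cast hn
  set p : ℝ := 2/(n:ℝ) with hp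
  have hp0 : 0 < p := by rw [hp]; positivity
  have hp2 : p ≤ 2/3 := by
    rw [hp, div_le_div_iff₀ (by linarith) (by norm_num)]; linarith
  refine ⟨(1:ℝ)/2, by norm_num, p*(7 - 9*p)/8, by nlinarith, ?_, ?_⟩
  · exact convex_part hn
  · intro x hx1 hx2
    rw [coord0_eq] at hx1
    have hval := hessDet_eq hn x hx1.1
    rw [hval]
    have hs : (∑ k : Fin n, if k = 0 then 0 else x k ^ 2) = sqTail x := (sqTail_eq x).symm
    rw [hs]
    have hs1 : sqTail x < 1/4 := by nlinarith [hx2]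
    have hs0 : 0 ≤ sqTail x := sqTail_nonneg x
    have hkey : 0 ≤ p * (1+p) * (1/4 - sqTail x) :=
      mul_nonneg (mul_nonneg hp0.le (by linarith)) (by linarith)
    nlinarith [hkey]
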